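/- Let m ≤ n be nonnegative integers and let n₁+n₂ be the sum of n independent Bernoulli random variables, m of them with success probability a and the remaining n−m with success probability b, where 0 < b < a < 1. With f* = ℓm/n, the frequency estimator f̂ = ℓ·((n₁+n₂)/n − b)/(a−b) satisfies E[f̂] = f* and Var[f̂] = ℓ²b(1−b)/(n(a−b)²) + ℓ·f*·(1−a−b)/(n(a−b)). -/

import Mathlib

open MeasureTheory ProbabilityTheory

lemma variance_fun_add_const' {Ω : Type} [MeasurableSpace Ω] {μ : Measure Ω}
    [IsProbabilityMeasure μ] (X : Ω → ℝ) (hX : MemLp X 2 μ) (d : ℝ) :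
    variance (fun ω => X ω + d) μ = variance X μ := by
  have hXd : MemLp (fun ω => X ω + d) 2 μ := hX.add (memLp_const d)
  have hE : (∫ ω, (X ω + d) ∂μ) = (∫ ω, X ω ∂μ) + d := by
    rw [integral_add (hX.integrable one_le_two) (integrable_const d)]
    simp
  rw [variance_eq_integral hXd.aestronglyMeasurable.aemeasurable,
    variance_eq_integral hX.aestronglyMeasurable.aemeasurable]
  congr 1
  funext ω
  simp only [Pi.pow_apply, Pi.sub_apply, hE]
  ring

/-- Expectation and variance of the PCKV frequency estimator. Let `n₁+n₂` be
the sum `S = ∑ u, Y u` of `n` independent Bernoulli random variables, `m` of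
them with success probability `a` and the remaining `n−m` with success
probability `b`, where `0 < b < a < 1`. With `f* = ℓm/n`, the estimator
`f̂ = ℓ·(S/n − b)/(a−b)` satisfies `E[f̂] = f*` and
`Var[f̂] = ℓ²b(1−b)/(n(a−b)²) + ℓ·f*·(1−a−b)/(n(a−b))`. -/
theorem pckv_frequency_mean_variance
    (n m ℓ : ℕ) (hn : 0 < n) (hm : m ≤ n) (hℓ : 1 ≤ ℓ)
    (a b : ℝ) (h0b : 0 < b) (hba : b < a) (ha1 : a < 1)
    (Ω : Type) [MeasurableSpace Ω] (μ : Measure Ω) [IsProbabilityMeasure μ]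
    (Y : Fin n → Ω → ℝ) (hY : ∀ u, Measurable (Y u))
    (hind : iIndepFun Y μ)
    (hY01 : ∀ u ω, Y u ω = 0 ∨ Y u ω = 1)
    (hpa : ∀ u : Fin n, (u : ℕ) < m → μ {ω | Y u ω = 1} = ENNReal.ofReal a)
    (hpb : ∀ u : Fin n, m ≤ (u : ℕ) → μ {ω | Y u ω = 1} = ENNReal.ofReal b)
    (fs : ℝ) (hfs : fs = (ℓ : ℝ) * (m : ℝ) / (n : ℝ)) :
    (∫ ω, (ℓ : ℝ) * ((∑ u, Y u ω) / (n : ℝ) - b) / (a - b) ∂μ) = fs ∧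
    variance (fun ω => (ℓ : ℝ) * ((∑ u, Y u ω) / (n : ℝ) - b) / (a - b)) μ
      = (ℓ : ℝ)^2 * b * (1 - b) / ((n : ℝ) * (a - b)^2)
        + (ℓ : ℝ) * fs * (1 - a - b) / ((n : ℝ) * (a - b)) := by
  have hn0 : (n : ℝ) ≠ 0 := Nat.cast_ne_zero.mpr hn.ne'
  have hab : a - b ≠ 0 := sub_ne_zero.mpr hba.ne'
  have ha0 : 0 ≤ a := (h0b.trans hba).le
  -- per-variable probabilities
  set p : Fin n → ℝ := fun u => if (u : ℕ) < m then a else b with hp_def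
  -- Membership in L²
  have hmem : ∀ u, MemLp (Y u) 2 μ := by
    intro u
    refine memLp_of_bounded (a := (0:ℝ)) (b := (1:ℝ))
      (ae_of_all _ fun ω => ?_) (hY u).aestronglyMeasurable 2
    rcases hY01 u ω with h | h <;> rw [h] <;> constructor <;> norm_num
  -- expectation of each Y u
  have hEY : ∀ u, (∫ ω, Y u ω ∂μ) = p u := by
    intro u
    have hind' : Y u = Set.indicator {ω | Y u ω = 1} (fun _ => (1:ℝ)) := by
      funext ω
      rcases hY01 u ω with h | h <;>
        simp [Set.indicator_apply, Set.mem_setOf_eq, h]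
    have hms : MeasurableSet {ω | Y u ω = 1} := hY u (measurableSet_singleton 1)
    rw [hind', integral_indicator_const (1:ℝ) hms]
    by_cases h : (u : ℕ) < m
    · rw [measureReal_def, hpa u h]; simp [hp_def, h, ENNReal.toReal_ofReal ha0]
    · rw [measureReal_def, hpb u (le_of_not_gt h)]; simp [hp_def, h, ENNReal.toReal_ofReal h0b.le]
  -- second moments and variances
  have hsq : ∀ u, (fun ω => (Y u ω) ^ 2) = Y u := by
    intro u; funext ω; rcases hY01 u ω with h | h <;> rw [h] <;> norm_num
  have hvar : ∀ u, variance (Y u) μ = p u * (1 - p u) := by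
    intro u
    rw [variance_eq_sub (hmem u)]
    have h2 : (∫ ω, (Y u ^ 2) ω ∂μ) = p u := by
      simp only [Pi.pow_apply]
      rw [show (fun ω => (Y u ω) ^ 2) = Y u from hsq u] at *
      exact hEY u
    rw [h2, hEY u]; ring
  -- sum as a function
  have hSeq : (fun ω => ∑ u, Y u ω) = ∑ u, Y u := by
    funext ω; simp
  have hSmem : MemLp (fun ω => ∑ u, Y u ω) 2 μ := by
    rw [hSeq]; exact memLp_finset_sum' _ fun u _ => hmem u
  -- expectation of the sum
  have hES : (∫ ω, (∑ u, Y u ω) ∂μ) = ∑ u, p u := by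
    rw [integral_finset_sum _ fun u _ => (hmem u).integrable one_le_two]
    exact Finset.sum_congr rfl fun u _ => hEY u
  -- variance of the sum
  have hVS : variance (fun ω => ∑ u, Y u ω) μ = ∑ u, p u * (1 - p u) := by
    rw [hSeq, IndepFun.variance_sum (fun u _ => hmem u)
      (fun i _ j _ hij => hind.indepFun hij)]
    exact Finset.sum_congr rfl fun u _ => hvar u
  -- evaluating the sums
  have hsum_split : ∀ (x y : ℝ),
      (∑ u : Fin n, (if (u : ℕ) < m then x else y))
        = (m : ℝ) * x + ((n : ℝ) - (m : ℝ)) * y := by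
    intro x y
    rw [Fin.sum_univ_eq_sum_range (fun i => if i < m then x else y) n]
    rw [Finset.range_eq_Ico, ← Finset.sum_Ico_consecutive _ (Nat.zero_le m) hm,
      ← Finset.range_eq_Ico]
    have h1 : (∑ i ∈ Finset.range m, (if i < m then x else y)) = (m : ℝ) * x := by
      rw [Finset.sum_congr rfl fun i hi => if_pos (Finset.mem_range.mp hi)]
      simp [mul_comm]
    have h2 : (∑ i ∈ Finset.Ico m n, (if i < m then x else y))
        = ((n : ℝ) - (m : ℝ)) * y := by
      rw [Finset.sum_congr rfl fun i hi =>
        if_neg (not_lt.mpr (Finset.mem_Ico.mp hi).1)]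
      rw [Finset.sum_const, Nat.card_Ico, nsmul_eq_mul, Nat.cast_sub hm]
    rw [h1, h2]
  have hES' : (∫ ω, (∑ u, Y u ω) ∂μ) = (m : ℝ) * a + ((n : ℝ) - (m : ℝ)) * b := by
    rw [hES]
    have : (∑ u : Fin n, p u) = ∑ u : Fin n, (if (u : ℕ) < m then a else b) :=
      Finset.sum_congr rfl fun u _ => rfl
    rw [this, hsum_split]
  have hVS' : variance (fun ω => ∑ u, Y u ω) μ
      = (m : ℝ) * (a * (1 - a)) + ((n : ℝ) - (m : ℝ)) * (b * (1 - b)) := by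
    rw [hVS]
    have : (∑ u : Fin n, p u * (1 - p u))
        = ∑ u : Fin n, (if (u : ℕ) < m then a * (1 - a) else b * (1 - b)) := by
      refine Finset.sum_congr rfl fun u _ => ?_
      by_cases h : (u : ℕ) < m <;> simp [hp_def, h]
    rw [this, hsum_split]
  -- rewrite the estimator as an affine function of the sum
  set c : ℝ := (ℓ : ℝ) / ((n : ℝ) * (a - b)) with hc_def
  set d : ℝ := -((ℓ : ℝ) * b / (a - b)) with hd_def
  have haff : ∀ ω, (ℓ : ℝ) * ((∑ u, Y u ω) / (n : ℝ) - b) / (a - b)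
      = c * (∑ u, Y u ω) + d := by
    intro ω
    rw [hc_def, hd_def]
    field_simp
    ring
  constructor
  · -- mean
    rw [show (fun ω => (ℓ : ℝ) * ((∑ u, Y u ω) / (n : ℝ) - b) / (a - b))
        = fun ω => c * (∑ u, Y u ω) + d from funext haff] -- note: integrand
    rw [integral_add ((hSmem.integrable one_le_two).const_mul c) (integrable_const d),
      integral_const_mul, hES', integral_const]
    simp only [probReal_univ, measure_univ, ENNReal.toReal_one, smul_eq_mul, one_mul]
    rw [hc_def, hd_def, hfs]
    field_simp
    ring
  · -- variance
    have heq : (fun ω => (ℓ : ℝ) * ((∑ u, Y u ω) / (n : ℝ) - b) / (a - b))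
        = fun ω => (c * (∑ u, Y u ω)) + d := funext haff
    rw [heq, variance_fun_add_const' _ (hSmem.const_mul c) d,
      variance_const_mul c _ μ, hVS', hfs, hc_def]
    field_simp
    ring
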